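/- Let g, h : 2^E → ℝ≥0 be monotone with g(∅) = h(∅) = 0, with generic submodularity ratio at least γ ∈ (0,1] and curvature at most c ∈ (0,1], and consider any double-greedy run for g and h. Then for every S ⊆ E with k := |S|, (1/c)·(1 − e^{−c})·γ·h(S) ≤ Σ_{i=1}^{k} φ_i. -/

import Mathlib

namespace IncDec

open Finset

variable {α : Type*} [Fintype α] [DecidableEq α]

/-- Marginal gain `F(x | S) = F(S ∪ {x}) - F(S)`. -/
def marg (F : Finset α → ℝ) (x : α) (S : Finset α) : ℝ := F (insert x S) - F S

/-- Marginal gain of a set: `F(T | S) = F(T ∪ S) - F(S)`. -/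
def margSet (F : Finset α → ℝ) (T S : Finset α) : ℝ := F (T ∪ S) - F S

/-- Monotone set function. -/
def Mono (F : Finset α → ℝ) : Prop := ∀ ⦃S T : Finset α⦄, S ⊆ T → F S ≤ F T

/-- Nonnegative set function. -/
def Nonneg (F : Finset α → ℝ) : Prop := ∀ S : Finset α, 0 ≤ F S

/-- The combined objective `f(S) = h(S) + g(E \ S)`. -/
def fObj (g h : Finset α → ℝ) (S : Finset α) : ℝ := h S + g Sᶜ

/-- `F` has generic submodularity ratio at least `γ`. -/
def GenSubRatioGE (F : Finset α → ℝ) (γ : ℝ) : Prop :=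
  ∀ A B : Finset α, ∀ e : α, marg F e A ≥ γ * marg F e (A ∪ B)

/-- `F` has curvature at most `c`. -/
def CurvatureLE (F : Finset α → ℝ) (c : ℝ) : Prop :=
  ∀ A B : Finset α, ∀ e : α, e ∉ B → marg F e (A ∪ B) ≥ (1 - c) * marg F e A

/-- Submodular set function. -/
def Submodular (F : Finset α → ℝ) : Prop :=
  ∀ ⦃S T : Finset α⦄, S ⊆ T → ∀ e : α, e ∉ T → marg F e T ≤ marg F e S

/-- Modular set function. -/
def Modular (F : Finset α → ℝ) : Prop := ∀ S : Finset α, F S = ∑ e ∈ S, F {e}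

/-- Gross substitute set function. -/
def GrossSubstitute (F : Finset α → ℝ) : Prop :=
  Submodular F ∧
    ∀ A B : Finset α, Disjoint A B → 2 ≤ B.card → ∀ b ∈ B,
      ∃ b' ∈ B.erase b,
        marg F b A + margSet F (B.erase b) A ≤ marg F b' A + margSet F (B.erase b') A

/-- The set of ratios appearing in the definition of the curvature. -/
def curvRatioSet (F : Finset α → ℝ) : Set ℝ :=
  {r | ∃ A B : Finset α, ∃ e : α, e ∉ B ∧ 0 < marg F e A ∧ r = marg F e (A ∪ B) / marg F e A}

/-- `F` has curvature exactly `c` (with `min ∅ := 1`, i.e. `c = 0` if the ratio set is empty). -/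
def CurvatureEq (F : Finset α → ℝ) (c : ℝ) : Prop :=
  (¬ (curvRatioSet F).Nonempty ∧ c = 0) ∨ IsLeast (curvRatioSet F) (1 - c)

/-- The set of ratios appearing in the definition of the generic submodularity ratio. -/
def gsRatioSet (F : Finset α → ℝ) : Set ℝ :=
  {r | ∃ A B : Finset α, ∃ e : α, 0 < marg F e (A ∪ B) ∧ r = marg F e A / marg F e (A ∪ B)}

/-- `F` has generic submodularity ratio exactly `γ` (with `min ∅ := 1`). -/
def GenSubRatioEq (F : Finset α → ℝ) (γ : ℝ) : Prop :=
  (¬ (gsRatioSet F).Nonempty ∧ γ = 1) ∨ IsLeast (gsRatioSet F) γ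

/-- The singleton-based ratio set `{F(e | E \ {e}) / F({e}) : e ∈ E, F({e}) > 0}`. -/
def curvSingletonSet (F : Finset α → ℝ) : Set ℝ :=
  {r | ∃ e : α, 0 < F {e} ∧ r = marg F e ({e}ᶜ) / F {e}}

/-- A run of the double-greedy algorithm for `g` and `h`: distinct elements `elt 0, …,
`elt (n-1)` enumerating `E` (`elt i` is the element `e*_{i+1}` of the paper), together with the
sets `H i`, `G i` (for `0 ≤ i ≤ n`), each new element maximizing the larger marginal gain and
being added to the side realizing it. -/
structure DGRun (α : Type*) [Fintype α] [DecidableEq α] (g h : Finset α → ℝ) where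
  elt : ℕ → α
  H : ℕ → Finset α
  G : ℕ → Finset α
  H0 : H 0 = ∅
  G0 : G 0 = ∅
  mem : ∀ i < Fintype.card α, elt i ∉ H i ∪ G i
  distinct : ∀ i < Fintype.card α, ∀ j < Fintype.card α, elt i = elt j → i = j
  enum : ∀ x : α, ∃ i < Fintype.card α, elt i = x
  greedy : ∀ i < Fintype.card α, ∀ x : α, x ∉ H i ∪ G i →
      max (marg g x (G i)) (marg h x (H i)) ≤ max (marg g (elt i) (G i)) (marg h (elt i) (H i))
  step : ∀ i < Fintype.card α,
      (H (i + 1) = insert (elt i) (H i) ∧ G (i + 1) = G i ∧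
        marg g (elt i) (G i) ≤ marg h (elt i) (H i)) ∨
      (G (i + 1) = insert (elt i) (G i) ∧ H (i + 1) = H i ∧
        marg h (elt i) (H i) ≤ marg g (elt i) (G i))

/-- `phi R i` is the increment `φ_{i+1}` of the double-greedy run `R`. -/
def phi {g h : Finset α → ℝ} (R : DGRun α g h) (i : ℕ) : ℝ :=
  max (marg g (R.elt i) (R.G i)) (marg h (R.elt i) (R.H i))


noncomputable def bseq (c : ℝ) (k : ℕ) (u : ℕ → ℝ) (m : ℕ → ℕ) : ℕ → ℝ
  | 0 => 0
  | t+1 => min 1 (bseq c k u m t +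
      (1 - u (k-t-1) * bseq c k u m t) / ((k:ℝ) - (m (k-t-1) : ℝ)))

lemma alg_D (c β D : ℝ) (hD : D ≠ 0) :
    1 - c * (β + (1 - β)/D) = (1 - c*β) * (1 - 1/D) + (1-c)/D := by
  field_simp; ring

lemma alg_c (c β D : ℝ) (hD : D ≠ 0) :
    1 - c * (β + (1 - c*β)/D) = (1 - c*β) * (1 - c/D) := by
  field_simp; ring

lemma alg_iden (c t D τ : ℝ) (hD : D ≠ 0) (hτD : τ * D = c*t + τ) :
    1/D - (c * (t+1) / D - τ) = (1 - c + τ)/D := by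
  field_simp; linear_combination hτD

lemma alg_exp (c t D : ℝ) (hD : D ≠ 0) :
    -(c*t)/D + -(c/D) = -(c*(t+1))/D := by
  field_simp; ring

lemma alg_heq (c D : ℝ) (hD : D ≠ 0) : (1-c) * (1 - 1/D) + (1-c)/D = 1-c := by
  field_simp; ring

set_option maxHeartbeats 2000000 in
lemma abstractLP (c V : ℝ) (hc0 : 0 < c) (hc1 : c ≤ 1) (hV : 0 ≤ V)
    (k : ℕ) (hk : 0 < k) (φ u : ℕ → ℝ) (m : ℕ → ℕ)
    (hφ : ∀ j, 0 ≤ φ j) (hu0 : ∀ j, 0 < u j) (hu1 : ∀ j, u j ≤ 1)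
    (hm0 : m 0 = 0) (hmle : ∀ i, m i ≤ i)
    (hmsucc : ∀ i, (u i = 1 ∧ m (i+1) = m i + 1) ∨ (u i = c ∧ m (i+1) = m i))
    (key : ∀ i < k, V ≤ (∑ j ∈ Finset.range i, u j * φ j) + ((k:ℝ) - (m i : ℝ)) * φ i) :
    (1/c) * (1 - Real.exp (-c)) * V ≤ ∑ j ∈ Finset.range k, φ j := by
  set b : ℕ → ℝ := bseq c k u m with hb
  clear_value b
  have hbeq : ∀ t, b (t+1) = min 1 (b t + (1 - u (k-t-1) * b t) / ((k:ℝ) - (m (k-t-1):ℝ))) := by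
    intro t; rw [hb]; simp only [bseq]
  have hb00 : b 0 = 0 := by rw [hb]; simp only [bseq]
  have hddpos : ∀ i, i < k → (0:ℝ) < (k:ℝ) - (m i : ℝ) := by
    intro i hi
    have h1 : (m i : ℝ) ≤ i := by exact_mod_cast hmle i
    have h2 : (i:ℝ) + 1 ≤ k := by exact_mod_cast hi
    linarith
  have hbb : ∀ t, 0 ≤ b t ∧ b t ≤ 1 := by
    intro t
    induction t with
    | zero => rw [hb00]; norm_num
    | succ t ih =>
      have hik : k - t - 1 < k := by omega
      have hd := hddpos _ hik
      have hnum : 0 ≤ 1 - u (k-t-1) * b t := by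
        have := hu1 (k-t-1)
        have h2 := (hu0 (k-t-1)).le
        nlinarith [ih.1, ih.2]
      rw [hbeq t]
      constructor
      · exact le_min zero_le_one (add_nonneg ih.1 (div_nonneg hnum hd.le))
      · exact min_le_left _ _
  have hbmono : ∀ t, b t ≤ b (t+1) := by
    intro t
    have hik : k - t - 1 < k := by omega
    have hd := hddpos _ hik
    have hnum : 0 ≤ 1 - u (k-t-1) * b t := by
      have := hu1 (k-t-1); have h2 := (hu0 (k-t-1)).le
      nlinarith [(hbb t).1, (hbb t).2]
    rw [hbeq t]
    exact le_min (hbb t).2 (le_add_of_nonneg_right (div_nonneg hnum hd.le))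
  -- descent
  have Desc : ∀ t, t ≤ k →
      (∑ j ∈ Finset.range (k-t), φ j) + b t * (V - ∑ j ∈ Finset.range (k-t), u j * φ j)
        ≤ ∑ j ∈ Finset.range k, φ j := by
    intro t
    induction t with
    | zero => intro _; rw [hb00]; simp
    | succ t ih =>
      intro ht1
      have ht : t ≤ k := by omega
      have IH := ih ht
      have hik : k - t - 1 < k := by omega
      have hkt : k - t = (k - t - 1) + 1 := by omega
      have hkt1 : k - (t+1) = k - t - 1 := by omega
      rw [hkt, Finset.sum_range_succ, Finset.sum_range_succ] at IH
      rw [hkt1]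
      have hd := hddpos _ hik
      have hnum : 0 ≤ 1 - u (k-t-1) * b t := by
        have := hu1 (k-t-1); have h2 := (hu0 (k-t-1)).le
        nlinarith [(hbb t).1, (hbb t).2]
      have hE1 : b (t+1) - b t ≤ (1 - u (k-t-1) * b t) / ((k:ℝ) - (m (k-t-1):ℝ)) := by
        have h5 : b (t+1) ≤ b t + (1 - u (k-t-1) * b t) / ((k:ℝ) - (m (k-t-1):ℝ)) := by
          rw [hbeq t]; exact min_le_right _ _
        linarith
      have hE0 : 0 ≤ b (t+1) - b t := by linarith [hbmono t]
      have main : (b (t+1) - b t) * (V - ∑ j ∈ Finset.range (k-t-1), u j * φ j)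
          ≤ φ (k-t-1) * (1 - b t * u (k-t-1)) := by
        set A := ∑ j ∈ Finset.range (k-t-1), u j * φ j with hA
        clear_value A
        rcases le_or_gt (V - A) 0 with hVA | hVA
        · have h1 : (b (t+1) - b t) * (V - A) ≤ 0 := mul_nonpos_of_nonneg_of_nonpos hE0 hVA
          have h2 : 0 ≤ φ (k-t-1) * (1 - b t * u (k-t-1)) := by
            apply mul_nonneg (hφ _); nlinarith [hnum]
          linarith
        · have hkey := key _ hik
          rw [← hA] at hkey
          have h2 : V - A ≤ ((k:ℝ) - (m (k-t-1):ℝ)) * φ (k-t-1) := by linarith [hkey]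
          have h3 : (V - A) / ((k:ℝ) - (m (k-t-1):ℝ)) ≤ φ (k-t-1) := by
            rw [div_le_iff₀ hd]; linarith [h2]
          calc (b (t+1) - b t) * (V - A)
              ≤ ((1 - u (k-t-1) * b t) / ((k:ℝ) - (m (k-t-1):ℝ))) * (V - A) :=
                mul_le_mul_of_nonneg_right hE1 hVA.le
            _ = (1 - u (k-t-1) * b t) * ((V - A) / ((k:ℝ) - (m (k-t-1):ℝ))) := by ring
            _ ≤ (1 - u (k-t-1) * b t) * φ (k-t-1) := mul_le_mul_of_nonneg_left h3 hnum
            _ = φ (k-t-1) * (1 - b t * u (k-t-1)) := by ring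
      have h6 : (∑ j ∈ Finset.range (k-t-1), φ j) + b (t+1) *
            (V - ∑ j ∈ Finset.range (k-t-1), u j * φ j)
          ≤ ((∑ j ∈ Finset.range (k-t-1), φ j) + φ (k-t-1)) + b t *
            (V - ((∑ j ∈ Finset.range (k-t-1), u j * φ j) + u (k-t-1) * φ (k-t-1))) := by
        nlinarith [main]
      linarith [IH]
  -- invariant
  have Inv : ∀ t, t ≤ k →
      1 - c * b t ≤ max (1-c) (Real.exp (-(c*t)/((k:ℝ) - (m (k-t):ℝ)))) := by
    intro t
    induction t with
    | zero =>
      intro _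
      have h0 : -(c*((0:ℕ):ℝ))/((k:ℝ) - (m (k-0):ℝ)) = 0 := by simp
      rw [h0, Real.exp_zero, hb00]
      have : (1:ℝ) ≤ max (1-c) 1 := le_max_right _ _
      linarith
    | succ t ih =>
      intro ht1
      have ht : t ≤ k := by omega
      have IH := ih ht
      have hik : k - t - 1 < k := by omega
      have hkt : k - t = (k - t - 1) + 1 := by omega
      have hkt1 : k - (t+1) = k - t - 1 := by omega
      rw [hkt1]
      have hb0 := (hbb t).1
      have hb1 := (hbb t).2
      have hdpos : (0:ℝ) < (k:ℝ) - (m (k-t-1):ℝ) := hddpos _ hik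
      have hDne : ((k:ℝ) - (m (k-t-1):ℝ)) ≠ 0 := ne_of_gt hdpos
      have hD1 : (1:ℝ) ≤ (k:ℝ) - (m (k-t-1):ℝ) := by
        have h1 : (m (k-t-1) : ℝ) ≤ (k-t-1 : ℕ) := by exact_mod_cast hmle (k-t-1)
        have h2 : ((k-t-1:ℕ):ℝ) + 1 ≤ k := by exact_mod_cast hik
        linarith
      rcases le_or_gt 1 (b t + (1 - u (k-t-1) * b t) / ((k:ℝ) - (m (k-t-1):ℝ))) with
        hclamp | hclamp
      · have hone : b (t+1) = 1 := by rw [hbeq t]; exact min_eq_left hclamp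
        rw [hone]
        have : 1 - c * 1 = 1 - c := by ring
        rw [this]; exact le_max_left _ _
      · have hbt1 : b (t+1) = b t + (1 - u (k-t-1) * b t) / ((k:ℝ) - (m (k-t-1):ℝ)) := by
          rw [hbeq t]; exact min_eq_right hclamp.le
        rw [hbt1]
        have hp0 : (0:ℝ) ≤ 1 - c * b t := by nlinarith
        rcases hmsucc (k-t-1) with ⟨hu, hmi⟩ | ⟨hu, hmi⟩
        · -- D-step: u = 1, m (k-t) = m (k-t-1) + 1
          have hmkt : m (k-t) = m (k-t-1) + 1 := by rw [hkt]; exact hmi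
          have hDD' : (k:ℝ) - (m (k-t):ℝ) = ((k:ℝ) - (m (k-t-1):ℝ)) - 1 := by
            rw [hmkt]; push_cast; ring
          have hD'0 : (0:ℝ) ≤ (k:ℝ) - (m (k-t):ℝ) := by
            have h1 : m (k-t) ≤ k - t := hmle _
            have h2 : ((k-t:ℕ):ℝ) ≤ k := by exact_mod_cast Nat.sub_le k t
            have h3 : (m (k-t):ℝ) ≤ ((k-t:ℕ):ℝ) := by exact_mod_cast h1
            linarith
          have htD' : (t:ℝ) ≤ (k:ℝ) - (m (k-t):ℝ) := by
            have h1 : m (k-t) ≤ k - t := hmle _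
            have h2 : ((k - t:ℕ):ℝ) = (k:ℝ) - t := by
              have : (t:ℝ) ≤ (k:ℝ) := by exact_mod_cast ht
              push_cast [Nat.cast_sub ht]; ring
            have h3 : (m (k-t):ℝ) ≤ ((k-t:ℕ):ℝ) := by exact_mod_cast h1
            linarith
          set τ := c * t / ((k:ℝ) - (m (k-t):ℝ)) with hτ
          clear_value τ
          have hτ0 : 0 ≤ τ := by
            rw [hτ]; exact div_nonneg (by positivity) hD'0
          have hτc : τ ≤ c := by
            rcases eq_or_lt_of_le hD'0 with hD'eq | hD'pos
            · rw [hτ, ← hD'eq, div_zero]; exact hc0.le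
            · rw [hτ, div_le_iff₀ hD'pos]
              nlinarith [htD']
          have hτD' : τ * ((k:ℝ) - (m (k-t):ℝ)) = c * t := by
            rcases eq_or_lt_of_le hD'0 with hD'eq | hD'pos
            · have ht0 : (t:ℝ) = 0 := by
                have := Nat.cast_nonneg (α := ℝ) t
                linarith [htD']
              rw [hτ, ← hD'eq, ht0]; ring
            · rw [hτ, div_mul_cancel₀ _ (ne_of_gt hD'pos)]
          have hτD : τ * ((k:ℝ) - (m (k-t-1):ℝ)) = c * t + τ := by
            rw [hDD'] at hτD'
            linear_combination hτD'
          have hE'pos : (0:ℝ) < Real.exp (-τ) := Real.exp_pos _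
          have hE'ge : 1 - τ ≤ Real.exp (-τ) := by
            have := Real.add_one_le_exp (-τ)
            linarith
          have hIH : 1 - c * b t ≤ max (1-c) (Real.exp (-τ)) := by
            have heq : Real.exp (-(c*t)/((k:ℝ) - (m (k-t):ℝ))) = Real.exp (-τ) := by
              congr 1
              rw [hτ, neg_div]
            rw [heq] at IH
            exact IH
          have hXval : b t + (1 - u (k-t-1) * b t) / ((k:ℝ) - (m (k-t-1):ℝ))
              = b t + (1 - b t) / ((k:ℝ) - (m (k-t-1):ℝ)) := by rw [hu, one_mul]
          have hval : 1 - c * (b t + (1 - u (k-t-1) * b t) / ((k:ℝ) - (m (k-t-1):ℝ)))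
              = (1 - c * b t) * (1 - 1/((k:ℝ) - (m (k-t-1):ℝ)))
                + (1-c)/((k:ℝ) - (m (k-t-1):ℝ)) := by
            rw [hXval]; exact alg_D c (b t) _ hDne
          have h1D : (0:ℝ) ≤ 1 - 1/((k:ℝ) - (m (k-t-1):ℝ)) := by
            rw [sub_nonneg, div_le_one hdpos]; exact hD1
          rcases max_cases (1-c) (Real.exp (-τ)) with ⟨hmax, _⟩ | ⟨hmax, _⟩ <;> rw [hmax] at hIH
          · apply le_max_of_le_left
            rw [hval]
            have h7 := mul_le_mul_of_nonneg_right hIH h1D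
            have heq2 := alg_heq c _ hDne
            linarith
          · apply le_max_of_le_right
            have hiden : 1/((k:ℝ) - (m (k-t-1):ℝ))
                  - (c * ((t:ℝ)+1) / ((k:ℝ) - (m (k-t-1):ℝ)) - τ)
                = (1 - c + τ)/((k:ℝ) - (m (k-t-1):ℝ)) :=
              alg_iden c t _ τ hDne hτD
            have hkey1 : (1-c) ≤ Real.exp (-τ) * (1 - c + τ) := by
              nlinarith [hE'ge, hτ0, hτc, mul_nonneg hτ0 (sub_nonneg.mpr hτc)]
            have hexp : Real.exp (-(c*((t+1:ℕ)))/((k:ℝ) - (m (k-t-1):ℝ)))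
                = Real.exp (-τ) * Real.exp
                    (-(c * ((t:ℝ)+1) / ((k:ℝ) - (m (k-t-1):ℝ)) - τ)) := by
              rw [← Real.exp_add]
              congr 1
              push_cast
              ring
            have hδexp : 1 - (c * ((t:ℝ)+1) / ((k:ℝ) - (m (k-t-1):ℝ)) - τ)
                ≤ Real.exp (-(c * ((t:ℝ)+1) / ((k:ℝ) - (m (k-t-1):ℝ)) - τ)) := by
              have := Real.add_one_le_exp (-(c * ((t:ℝ)+1) / ((k:ℝ) - (m (k-t-1):ℝ)) - τ))
              linarith
            have h10 : (1-c)/((k:ℝ) - (m (k-t-1):ℝ))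
                ≤ (Real.exp (-τ) * (1 - c + τ))/((k:ℝ) - (m (k-t-1):ℝ)) := by
              rw [div_le_div_iff₀ hdpos hdpos]
              nlinarith [hkey1, hdpos.le]
            have h8 : Real.exp (-τ) * (1 - (c * ((t:ℝ)+1) / ((k:ℝ) - (m (k-t-1):ℝ)) - τ))
                  - Real.exp (-τ) * (1 - 1/((k:ℝ) - (m (k-t-1):ℝ)))
                = Real.exp (-τ) * (1/((k:ℝ) - (m (k-t-1):ℝ))
                    - (c * ((t:ℝ)+1) / ((k:ℝ) - (m (k-t-1):ℝ)) - τ)) := by ring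
            have h9 : Real.exp (-τ) * (1/((k:ℝ) - (m (k-t-1):ℝ))
                    - (c * ((t:ℝ)+1) / ((k:ℝ) - (m (k-t-1):ℝ)) - τ))
                = (Real.exp (-τ) * (1 - c + τ))/((k:ℝ) - (m (k-t-1):ℝ)) := by
              rw [hiden]; ring
            have hstep2 : Real.exp (-τ) * (1 - 1/((k:ℝ) - (m (k-t-1):ℝ)))
                  + (1-c)/((k:ℝ) - (m (k-t-1):ℝ))
                ≤ Real.exp (-τ) * (1 - (c * ((t:ℝ)+1) / ((k:ℝ) - (m (k-t-1):ℝ)) - τ)) := by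
              linarith [h10, h8, h9]
            have hstep1 := mul_le_mul_of_nonneg_right hIH h1D
            have hstep3 := mul_le_mul_of_nonneg_left hδexp hE'pos.le
            rw [hval]
            calc (1 - c * b t) * (1 - 1/((k:ℝ) - (m (k-t-1):ℝ)))
                  + (1-c)/((k:ℝ) - (m (k-t-1):ℝ))
                ≤ Real.exp (-τ) * (1 - (c * ((t:ℝ)+1) / ((k:ℝ) - (m (k-t-1):ℝ)) - τ)) := by
                  linarith
              _ ≤ Real.exp (-τ) * Real.exp
                    (-(c * ((t:ℝ)+1) / ((k:ℝ) - (m (k-t-1):ℝ)) - τ)) := hstep3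
              _ = Real.exp (-(c*((t+1:ℕ)))/((k:ℝ) - (m (k-t-1):ℝ))) := hexp.symm
        · -- c-step
          have hmkt : m (k-t) = m (k-t-1) := by rw [hkt]; exact hmi
          rw [hmkt] at IH
          have hval : 1 - c * (b t + (1 - u (k-t-1) * b t) / ((k:ℝ) - (m (k-t-1):ℝ)))
              = (1 - c * b t) * (1 - c/((k:ℝ) - (m (k-t-1):ℝ))) := by
            rw [hu]; exact alg_c c (b t) _ hDne
          have h1cD : (0:ℝ) ≤ 1 - c/((k:ℝ) - (m (k-t-1):ℝ)) := by
            rw [sub_nonneg, div_le_one hdpos]; linarith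
          have hecd : 1 - c/((k:ℝ) - (m (k-t-1):ℝ))
              ≤ Real.exp (-(c/((k:ℝ) - (m (k-t-1):ℝ)))) := by
            have := Real.add_one_le_exp (-(c/((k:ℝ) - (m (k-t-1):ℝ))))
            linarith
          rcases max_cases (1-c) (Real.exp (-(c*t)/((k:ℝ) - (m (k-t-1):ℝ)))) with
            ⟨hmax, _⟩ | ⟨hmax, _⟩ <;> rw [hmax] at IH
          · apply le_max_of_le_left
            rw [hval]
            nlinarith [mul_le_mul_of_nonneg_right IH h1cD,
              mul_nonneg (sub_nonneg.mpr hc1) (div_nonneg hc0.le hdpos.le)]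
          · apply le_max_of_le_right
            rw [hval]
            have h11 : (1 - c * b t) * (1 - c/((k:ℝ) - (m (k-t-1):ℝ)))
                ≤ Real.exp (-(c*t)/((k:ℝ) - (m (k-t-1):ℝ)))
                  * Real.exp (-(c/((k:ℝ) - (m (k-t-1):ℝ)))) :=
              mul_le_mul IH hecd h1cD (Real.exp_pos _).le
            have h12 : Real.exp (-(c*t)/((k:ℝ) - (m (k-t-1):ℝ)))
                  * Real.exp (-(c/((k:ℝ) - (m (k-t-1):ℝ))))
                = Real.exp (-(c*((t+1:ℕ)))/((k:ℝ) - (m (k-t-1):ℝ))) := by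
              rw [← Real.exp_add]
              congr 1
              push_cast
              exact alg_exp c t _ hDne
            linarith [h11, h12.le]
  -- conclude
  have hbk : (1 - Real.exp (-c))/c ≤ b k := by
    have hinv := Inv k (le_refl k)
    have hknz : ((k:ℝ)) ≠ 0 := by positivity
    have h1 : -(c*(k:ℕ))/((k:ℝ) - (m (k-k):ℝ)) = -c := by
      rw [Nat.sub_self, hm0]
      push_cast
      field_simp
      ring
    rw [h1] at hinv
    have h2 : 1 - c ≤ Real.exp (-c) := by
      have := Real.add_one_le_exp (-c)
      linarith
    have h3 : max (1-c) (Real.exp (-c)) = Real.exp (-c) := max_eq_right h2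
    rw [h3] at hinv
    rw [div_le_iff₀ hc0]
    linarith
  have hfin := Desc k (le_refl k)
  simp only [Nat.sub_self, Finset.range_zero, Finset.sum_empty, zero_add, sub_zero] at hfin
  have h4 : (1/c) * (1 - Real.exp (-c)) * V = ((1 - Real.exp (-c))/c) * V := by ring
  rw [h4]
  have h5 : ((1 - Real.exp (-c))/c) * V ≤ b k * V := mul_le_mul_of_nonneg_right hbk hV
  linarith

section RunLemmas


variable {g h : Finset α → ℝ}

lemma marg_nonneg {F : Finset α → ℝ} (hF : Mono F) (x : α) (S : Finset α) :
    0 ≤ marg F x S := by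
  have := hF (Finset.subset_insert x S)
  simp only [marg]; linarith

lemma phi_nonneg (R : DGRun α g h) (hgm : Mono g) (i : ℕ) : 0 ≤ phi R i :=
  le_trans (marg_nonneg hgm _ _) (le_max_left _ _)

lemma margh_le_phi (R : DGRun α g h) (i : ℕ) :
    marg h (R.elt i) (R.H i) ≤ phi R i := le_max_right _ _

lemma run_H_succ (R : DGRun α g h) {i : ℕ} (hi : i < Fintype.card α) :
    R.H i ⊆ R.H (i+1) := by
  rcases R.step i hi with ⟨h1, _, _⟩ | ⟨_, h2, _⟩
  · rw [h1]; exact Finset.subset_insert _ _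
  · rw [h2]

lemma run_H_mono (R : DGRun α g h) {i j : ℕ} (hij : i ≤ j) (hj : j ≤ Fintype.card α) :
    R.H i ⊆ R.H j := by
  induction j with
  | zero => simp_all
  | succ j ih =>
    rcases Nat.lt_or_ge i (j+1) with hlt | hge
    · have hji : i ≤ j := by omega
      exact (ih hji (by omega)).trans (run_H_succ R (by omega))
    · have : i = j + 1 := by omega
      subst this; rfl

lemma run_F_succ (R : DGRun α g h) {i : ℕ} (hi : i < Fintype.card α) :
    R.H (i+1) ∪ R.G (i+1) = insert (R.elt i) (R.H i ∪ R.G i) := by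
  rcases R.step i hi with ⟨h1, h2, _⟩ | ⟨h1, h2, _⟩
  · rw [h1, h2, Finset.insert_union]
  · rw [h1, h2, Finset.union_insert]

lemma run_F_mono (R : DGRun α g h) {i j : ℕ} (hij : i ≤ j) (hj : j ≤ Fintype.card α) :
    R.H i ∪ R.G i ⊆ R.H j ∪ R.G j := by
  induction j with
  | zero => simp_all
  | succ j ih =>
    rcases Nat.lt_or_ge i (j+1) with hlt | hge
    · have hji : i ≤ j := by omega
      refine (ih hji (by omega)).trans ?_
      rw [run_F_succ R (by omega)]
      exact Finset.subset_insert _ _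
    · have : i = j + 1 := by omega
      subst this; rfl

lemma run_mem_F (R : DGRun α g h) :
    ∀ i, i ≤ Fintype.card α → ∀ x ∈ R.H i ∪ R.G i, ∃ j, j < i ∧ R.elt j = x := by
  intro i
  induction i with
  | zero => intro _ x hx; rw [R.H0, R.G0] at hx; simp at hx
  | succ i ih =>
    intro hi x hx
    rw [run_F_succ R (by omega)] at hx
    rcases Finset.mem_insert.mp hx with rfl | hx'
    · exact ⟨i, by omega, rfl⟩
    · obtain ⟨j, hj, hje⟩ := ih (by omega) x hx'
      exact ⟨j, by omega, hje⟩

lemma run_elt_mem_F (R : DGRun α g h) {j : ℕ} (hj : j < Fintype.card α) :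
    R.elt j ∈ R.H (j+1) ∪ R.G (j+1) := by
  rw [run_F_succ R hj]; exact Finset.mem_insert_self _ _

lemma run_hstep_pos (R : DGRun α g h) {i : ℕ} (hi : i < Fintype.card α)
    (hs : R.elt i ∈ R.H (i+1)) :
    R.H (i+1) = insert (R.elt i) (R.H i) ∧ R.G (i+1) = R.G i := by
  rcases R.step i hi with ⟨h1, h2, _⟩ | ⟨h1, h2, _⟩
  · exact ⟨h1, h2⟩
  · exfalso
    rw [h2] at hs
    exact R.mem i hi (Finset.mem_union_left _ hs)

lemma run_hstep_neg (R : DGRun α g h) {i : ℕ} (hi : i < Fintype.card α)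
    (hs : R.elt i ∉ R.H (i+1)) :
    R.H (i+1) = R.H i ∧ R.G (i+1) = insert (R.elt i) (R.G i) := by
  rcases R.step i hi with ⟨h1, h2, _⟩ | ⟨h1, h2, _⟩
  · exfalso; rw [h1] at hs; exact hs (Finset.mem_insert_self _ _)
  · exact ⟨h2, h1⟩

/-- Telescoping for `h (R.H i)`. -/
lemma run_T1 (R : DGRun α g h) (hhe : h ∅ = 0) :
    ∀ i, i ≤ Fintype.card α →
      h (R.H i) = ∑ j ∈ Finset.range i,
        (if R.elt j ∈ R.H (j+1) then marg h (R.elt j) (R.H j) else 0) := by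
  intro i
  induction i with
  | zero => intro _; simp [R.H0, hhe]
  | succ i ih =>
    intro hi
    rw [Finset.sum_range_succ, ← ih (by omega)]
    by_cases hs : R.elt i ∈ R.H (i+1)
    · rw [if_pos hs, (run_hstep_pos R (by omega) hs).1]
      simp [marg]
    · rw [if_neg hs, (run_hstep_neg R (by omega) hs).1]
      ring

/-- Telescoping lower bound for `h (S ∪ R.H i)`. -/
lemma run_T2 (R : DGRun α g h) {c : ℝ} (hhC : CurvatureLE h c) (hhm : Mono h)
    (S : Finset α) :
    ∀ i, i ≤ Fintype.card α →
      h S + (1 - c) * ∑ j ∈ Finset.range i,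
        (if R.elt j ∈ R.H (j+1) ∧ R.elt j ∉ S then marg h (R.elt j) (R.H j) else 0)
      ≤ h (S ∪ R.H i) := by
  intro i
  induction i with
  | zero => intro _; simp [R.H0]
  | succ i ih =>
    intro hi
    have IH := ih (by omega)
    rw [Finset.sum_range_succ]
    by_cases hs : R.elt i ∈ R.H (i+1) ∧ R.elt i ∉ S
    · rw [if_pos hs]
      have hins : S ∪ R.H (i+1) = insert (R.elt i) (S ∪ R.H i) := by
        rw [(run_hstep_pos R (by omega) hs.1).1, Finset.union_insert]
      have hcurv := hhC (R.H i) S (R.elt i) hs.2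
      have hcomm : R.H i ∪ S = S ∪ R.H i := Finset.union_comm _ _
      rw [hcomm] at hcurv
      have hmarg : h (S ∪ R.H (i+1)) = marg h (R.elt i) (S ∪ R.H i) + h (S ∪ R.H i) := by
        rw [hins]; simp [marg]
      rw [hmarg, mul_add]
      linarith [IH, hcurv]
    · rw [if_neg hs]
      have hmono : h (S ∪ R.H i) ≤ h (S ∪ R.H (i+1)) :=
        hhm (Finset.union_subset_union_right (run_H_succ R (by omega)))
      rw [mul_add, mul_zero]
      linarith [IH]

/-- Weak-submodularity expansion lemma. -/
lemma exp_aux {F : Finset α → ℝ} {γ : ℝ} (hγ : GenSubRatioGE F γ)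
    (U T : Finset α) (A : α → Finset α) (hA : ∀ s, A s ⊆ U) :
    γ * (F (T ∪ U) - F U) ≤ ∑ s ∈ T \ U, marg F s (A s) := by
  classical
  induction T using Finset.induction_on with
  | empty => simp
  | @insert t T' htT' IH =>
    by_cases htU : t ∈ U
    · rw [Finset.insert_sdiff_of_mem _ htU]
      have h1 : insert t T' ∪ U = T' ∪ U := by
        rw [Finset.insert_union, Finset.insert_eq_self.mpr (Finset.mem_union_right _ htU)]
      rw [h1]; exact IH
    · rw [Finset.insert_sdiff_of_notMem _ htU]
      have ht' : t ∉ T' \ U := fun hmem => htT' (Finset.mem_sdiff.mp hmem).1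
      rw [Finset.sum_insert ht']
      have hkey : γ * marg F t (T' ∪ U) ≤ marg F t (A t) := by
        have h2 := hγ (A t) (T' ∪ U) t
        rwa [Finset.union_eq_right.mpr ((hA t).trans Finset.subset_union_right)] at h2
      have h1 : insert t T' ∪ U = insert t (T' ∪ U) := Finset.insert_union _ _ _
      rw [h1]
      have hexp : F (insert t (T' ∪ U)) - F U = marg F t (T' ∪ U) + (F (T' ∪ U) - F U) := by
        simp [marg]
      rw [hexp, mul_add]
      exact add_le_add hkey IH

end RunLemmas

set_option maxHeartbeats 2000000 in
theorem stmt10 (g h : Finset α → ℝ) (c γ : ℝ)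
    (hgm : Mono g) (hhm : Mono h) (hg0 : Nonneg g) (hh0 : Nonneg h)
    (hge : g ∅ = 0) (hhe : h ∅ = 0)
    (hc0 : 0 < c) (hc1 : c ≤ 1) (hγ0 : 0 < γ) (hγ1 : γ ≤ 1)
    (hgC : CurvatureLE g c) (hhC : CurvatureLE h c)
    (hgγ : GenSubRatioGE g γ) (hhγ : GenSubRatioGE h γ)
    (R : DGRun α g h) :
    ∀ S : Finset α,
      (1 / c) * (1 - Real.exp (-c)) * (γ * h S) ≤ ∑ i ∈ Finset.range S.card, phi R i := by
  intro S
  classical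
  rcases Nat.eq_zero_or_pos S.card with hk0 | hk
  · have hS : S = ∅ := Finset.card_eq_zero.mp hk0
    subst hS
    simp [hhe]
  · have hkn : S.card ≤ Fintype.card α := by
      simpa [Finset.card_univ] using Finset.card_le_univ S
    set u : ℕ → ℝ := fun j => if R.elt j ∈ S then (1:ℝ) else c with hu_def
    set m : ℕ → ℕ := fun i => ((Finset.range i).filter (fun j => R.elt j ∈ S)).card with hm_def
    have hVnn : 0 ≤ γ * h S := mul_nonneg hγ0.le (hh0 S)
    have hφnn : ∀ j, 0 ≤ phi R j := phi_nonneg R hgm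
    have hu0 : ∀ j, 0 < u j := by
      intro j; simp only [hu_def]; split
      · norm_num
      · exact hc0
    have hu1 : ∀ j, u j ≤ 1 := by
      intro j; simp only [hu_def]; split
      · exact le_refl 1
      · exact hc1
    have hm0 : m 0 = 0 := by simp [hm_def]
    have hmle : ∀ i, m i ≤ i := by
      intro i
      simp only [hm_def]
      calc ((Finset.range i).filter (fun j => R.elt j ∈ S)).card
          ≤ (Finset.range i).card := Finset.card_filter_le _ _
        _ = i := Finset.card_range i
    have hmsucc : ∀ i, (u i = 1 ∧ m (i+1) = m i + 1) ∨ (u i = c ∧ m (i+1) = m i) := by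
      intro i
      have hins : Finset.range (i+1) = insert i (Finset.range i) := Finset.range_add_one
      by_cases hP : R.elt i ∈ S
      · left
        constructor
        · simp [hu_def, hP]
        · simp only [hm_def, hins, Finset.filter_insert, if_pos hP]
          rw [Finset.card_insert_of_notMem (by simp)]
      · right
        constructor
        · simp [hu_def, hP]
        · simp only [hm_def, hins, Finset.filter_insert, if_neg hP]
    -- the key per-step inequality
    have key : ∀ i < S.card, γ * h S ≤ (∑ j ∈ Finset.range i, u j * phi R j)
        + ((S.card : ℝ) - (m i : ℝ)) * phi R i := by
      intro i hi
      have hik : i < Fintype.card α := lt_of_lt_of_le hi hkn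
      -- choice of insertion indices
      have hex : ∀ s : α, ∃ j : ℕ, s ∈ R.H i ∪ R.G i → (j < i ∧ R.elt j = s) := by
        intro s
        by_cases hs : s ∈ R.H i ∪ R.G i
        · obtain ⟨j, hj1, hj2⟩ := run_mem_F R i hik.le s hs
          exact ⟨j, fun _ => ⟨hj1, hj2⟩⟩
        · exact ⟨0, fun h' => absurd h' hs⟩
      choose f hf using hex
      set A : α → Finset α := fun s => if s ∈ R.H i ∪ R.G i then R.H (f s) else R.H i
        with hA_def
      have hA : ∀ s, A s ⊆ R.H i := by
        intro s
        by_cases hs : s ∈ R.H i ∪ R.G i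
        · simp only [hA_def, if_pos hs]
          exact run_H_mono R (hf s hs).1.le hik.le
        · simp only [hA_def, if_neg hs]
          exact Finset.Subset.refl _
      have EXPL := exp_aux hhγ (R.H i) S A hA
      have hsplit : S \ R.H i = (S \ (R.H i ∪ R.G i)) ∪ ((S ∩ R.G i) \ R.H i) := by
        ext x
        simp only [Finset.mem_sdiff, Finset.mem_union, Finset.mem_inter]
        tauto
      have hdisj : Disjoint (S \ (R.H i ∪ R.G i)) ((S ∩ R.G i) \ R.H i) := by
        rw [Finset.disjoint_left]
        intro x hx1 hx2
        simp only [Finset.mem_sdiff, Finset.mem_union, Finset.mem_inter] at hx1 hx2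
        tauto
      rw [hsplit, Finset.sum_union hdisj] at EXPL
      have part1 : ∑ s ∈ S \ (R.H i ∪ R.G i), marg h s (A s)
          ≤ ((S \ (R.H i ∪ R.G i)).card : ℝ) * phi R i := by
        have hb : ∀ s ∈ S \ (R.H i ∪ R.G i), marg h s (A s) ≤ phi R i := by
          intro s hsmem
          have hs : s ∉ R.H i ∪ R.G i := (Finset.mem_sdiff.mp hsmem).2
          have hAs : A s = R.H i := if_neg hs
          rw [hAs]
          exact le_trans (le_max_right _ _) (R.greedy i hik s hs)
        calc ∑ s ∈ S \ (R.H i ∪ R.G i), marg h s (A s)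
            ≤ (S \ (R.H i ∪ R.G i)).card • phi R i := Finset.sum_le_card_nsmul _ _ _ hb
          _ = ((S \ (R.H i ∪ R.G i)).card : ℝ) * phi R i := nsmul_eq_mul _ _
      have part2 : ∑ s ∈ (S ∩ R.G i) \ R.H i, marg h s (A s)
          ≤ ∑ j ∈ Finset.range i,
              (if R.elt j ∈ S ∧ R.elt j ∉ R.H (j+1) then phi R j else 0) := by
        set B := (S ∩ R.G i) \ R.H i with hB_def
        have hmemB : ∀ s ∈ B, s ∈ R.H i ∪ R.G i := by
          intro s hs
          have := Finset.mem_sdiff.mp hs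
          exact Finset.mem_union_right _ (Finset.mem_inter.mp this.1).2
        have hfs : ∀ s ∈ B, f s < i ∧ R.elt (f s) = s := fun s hs => hf s (hmemB s hs)
        have hstep1 : ∀ s ∈ B, marg h s (A s) ≤ phi R (f s) := by
          intro s hs
          have hAs : A s = R.H (f s) := if_pos (hmemB s hs)
          rw [hAs]
          have heq : marg h s (R.H (f s)) = marg h (R.elt (f s)) (R.H (f s)) := by
            rw [(hfs s hs).2]
          rw [heq]
          exact le_max_right _ _
        have hinj : ∀ x ∈ B, ∀ y ∈ B, f x = f y → x = y := by
          intro x hx y hy hxy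
          have h1 := (hfs x hx).2
          have h2 := (hfs y hy).2
          rw [← h1, ← h2, hxy]
        have hsub : B.image f ⊆ (Finset.range i).filter
            (fun j => R.elt j ∈ S ∧ R.elt j ∉ R.H (j+1)) := by
          intro j hj
          obtain ⟨s, hs, rfl⟩ := Finset.mem_image.mp hj
          have hfs' := hfs s hs
          refine Finset.mem_filter.mpr ⟨Finset.mem_range.mpr hfs'.1, ?_, ?_⟩
          · rw [hfs'.2]
            exact (Finset.mem_inter.mp (Finset.mem_sdiff.mp hs).1).1
          · intro hmem
            have hsub2 : R.H (f s + 1) ⊆ R.H i := run_H_mono R hfs'.1 hik.le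
            have : s ∈ R.H i := by
              rw [← hfs'.2]
              exact hsub2 hmem
            exact (Finset.mem_sdiff.mp hs).2 this
        calc ∑ s ∈ B, marg h s (A s) ≤ ∑ s ∈ B, phi R (f s) := Finset.sum_le_sum hstep1
          _ = ∑ j ∈ B.image f, phi R j := (Finset.sum_image hinj).symm
          _ ≤ ∑ j ∈ (Finset.range i).filter
                (fun j => R.elt j ∈ S ∧ R.elt j ∉ R.H (j+1)), phi R j :=
              Finset.sum_le_sum_of_subset_of_nonneg hsub (fun j _ _ => hφnn j)
          _ = ∑ j ∈ Finset.range i,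
                (if R.elt j ∈ S ∧ R.elt j ∉ R.H (j+1) then phi R j else 0) :=
              Finset.sum_filter _ _
      -- cardinality identity
      have hmcard : (S ∩ (R.H i ∪ R.G i)).card = m i := by
        have himg : S ∩ (R.H i ∪ R.G i)
            = ((Finset.range i).filter (fun j => R.elt j ∈ S)).image R.elt := by
          ext x
          constructor
          · intro hx
            have hx1 := (Finset.mem_inter.mp hx).1
            have hx2 := (Finset.mem_inter.mp hx).2
            obtain ⟨j, hj, hje⟩ := run_mem_F R i hik.le x hx2
            exact Finset.mem_image.mpr ⟨j, Finset.mem_filter.mpr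
              ⟨Finset.mem_range.mpr hj, by rw [hje]; exact hx1⟩, hje⟩
          · intro hx
            obtain ⟨j, hjm, hje⟩ := Finset.mem_image.mp hx
            have hj1 := Finset.mem_filter.mp hjm
            have hji : j < i := Finset.mem_range.mp hj1.1
            refine Finset.mem_inter.mpr ⟨by rw [← hje]; exact hj1.2, ?_⟩
            rw [← hje]
            exact run_F_mono R hji hik.le (run_elt_mem_F R (lt_of_lt_of_le hji hik.le))
        rw [himg, hm_def, Finset.card_image_of_injOn]
        intro x hx y hy hxy
        have hxr : x < i := Finset.mem_range.mp (Finset.mem_filter.mp hx).1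
        have hyr : y < i := Finset.mem_range.mp (Finset.mem_filter.mp hy).1
        exact R.distinct x (lt_of_lt_of_le hxr hik.le) y (lt_of_lt_of_le hyr hik.le) hxy
      have hcards : ((S \ (R.H i ∪ R.G i)).card : ℝ) = (S.card : ℝ) - (m i : ℝ) := by
        have hcc := Finset.card_sdiff_add_card_inter S (R.H i ∪ R.G i)
        rw [hmcard] at hcc
        have := congrArg (Nat.cast : ℕ → ℝ) hcc
        push_cast at this
        linarith
      -- telescoping
      have T1 := run_T1 R hhe i hik.le
      have T2 := run_T2 R hhC hhm S i hik.le
      set W1 := ∑ j ∈ Finset.range i,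
        (if R.elt j ∈ R.H (j+1) ∧ R.elt j ∉ S then marg h (R.elt j) (R.H j) else 0) with hW1
      set W2 := ∑ j ∈ Finset.range i,
        (if R.elt j ∈ S ∧ R.elt j ∉ R.H (j+1) then phi R j else 0) with hW2
      set W3 := ∑ j ∈ Finset.range i,
        (if R.elt j ∈ R.H (j+1) then marg h (R.elt j) (R.H j) else 0) with hW3
      have step1 : γ * h S + γ * ((1-c) * W1) ≤ γ * h (S ∪ R.H i) := by
        have := mul_le_mul_of_nonneg_left T2 hγ0.le
        rw [mul_add] at this
        linarith
      have step2 : γ * h (S ∪ R.H i) - γ * h (R.H i)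
          ≤ W2 + ((S.card : ℝ) - (m i : ℝ)) * phi R i := by
        rw [mul_sub] at EXPL
        rw [hcards] at part1
        linarith [EXPL, part1, part2]
      have comb : γ * W3 - γ * ((1-c) * W1) + W2 ≤ ∑ j ∈ Finset.range i, u j * phi R j := by
        have hrw : γ * W3 - γ * ((1-c) * W1) + W2 = ∑ j ∈ Finset.range i,
            (γ * (if R.elt j ∈ R.H (j+1) then marg h (R.elt j) (R.H j) else 0)
              - γ * ((1-c) * (if R.elt j ∈ R.H (j+1) ∧ R.elt j ∉ S
                  then marg h (R.elt j) (R.H j) else 0))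
              + (if R.elt j ∈ S ∧ R.elt j ∉ R.H (j+1) then phi R j else 0)) := by
          rw [Finset.sum_add_distrib, Finset.sum_sub_distrib, ← Finset.mul_sum, ← hW3,
            ← Finset.mul_sum, ← Finset.mul_sum, ← hW1, ← hW2]
        rw [hrw]
        apply Finset.sum_le_sum
        intro j hj
        have hM0 : 0 ≤ marg h (R.elt j) (R.H j) := marg_nonneg hhm _ _
        have hMφ : marg h (R.elt j) (R.H j) ≤ phi R j := le_max_right _ _
        have hφ0 : 0 ≤ phi R j := hφnn j
        by_cases hP : R.elt j ∈ S <;> by_cases hst : R.elt j ∈ R.H (j+1) <;>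
          simp only [hu_def, hP, hst, if_pos, if_neg, and_true, and_false, true_and,
            false_and, not_true, not_false_iff, if_true, if_false, ite_true, ite_false,
            not_false_eq_true] <;>
          [skip; skip; skip; skip]
        · -- P, hstep : γ*M - 0 + 0 ≤ 1*φ
          nlinarith
        · -- P, ¬hstep : 0 - 0 + φ ≤ 1*φ
          nlinarith
        · -- ¬P, hstep : γ*M - γ*(1-c)*M + 0 ≤ c*φ
          have h1 : γ * marg h (R.elt j) (R.H j) ≤ marg h (R.elt j) (R.H j) := by
            nlinarith
          nlinarith [mul_le_mul_of_nonneg_left h1 hc0.le,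
            mul_le_mul_of_nonneg_left hMφ hc0.le]
        · -- ¬P, ¬hstep
          nlinarith [mul_nonneg hc0.le hφ0]
      have step3 : γ * h (R.H i) = γ * W3 := by rw [T1]
      linarith [step1, step2, comb]
    have := abstractLP c (γ * h S) hc0 hc1 hVnn S.card hk (phi R) u m hφnn hu0 hu1
      hm0 hmle hmsucc key
    exact this

end IncDec
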